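/- For every t ∈ (0,1), T(1/t, 1/(1−t)) > 0 and Σ_{F ⊆ E} t^{|F|}·(1−t)^{|E|−|F|}·(κ − r(F)) = ((1−t)/t) · T_x(1/t, 1/(1−t)) / T(1/t, 1/(1−t)). That is, the expected (ℓ−1)-st reduced Betti number of the ℓ-Bernoulli cell complex with parameter t equals ((1−t)/t) times the logarithmic x-derivative of the ℓ-Tutte polynomial at (1/t, 1/(1−t)). -/

import Mathlib

open Finset

lemma stmt7_key (t : ℝ) (ht0 : 0 < t) (ht1 : t < 1)
    (k m n κ : ℕ) (hk : k ≤ κ) (hkm : k ≤ m) (hmn : m ≤ n) :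
    t ^ m * (1 - t) ^ (n - m) =
      (t ^ κ * (1 - t) ^ n / (1 - t) ^ κ) *
        (((1 - t) / t) ^ (κ - k) * (t / (1 - t)) ^ (m - k)) := by
  have h1t : (0:ℝ) < 1 - t := by linarith
  obtain ⟨p, hp⟩ : ∃ p, κ = k + p := ⟨κ - k, by omega⟩
  obtain ⟨q, hq⟩ : ∃ q, m = k + q := ⟨m - k, by omega⟩
  obtain ⟨s, hs⟩ : ∃ s, n = m + s := ⟨n - m, by omega⟩
  subst hp hq hs
  have e1 : k + p - k = p := by omega
  have e2 : k + q - k = q := by omega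
  have e3 : k + q + s - (k + q) = s := by omega
  rw [e1, e2, e3]
  have htne : t ≠ 0 := ne_of_gt ht0
  have h1tne : (1 - t : ℝ) ≠ 0 := ne_of_gt h1t
  rw [div_pow, div_pow]
  field_simp
  ring

/-- The expected `(ℓ-1)`-st reduced Betti number of the `ℓ`-Bernoulli cell
complex with parameter `t` equals `((1-t)/t)` times the logarithmic
`x`-derivative of the `ℓ`-Tutte polynomial at `(1/t, 1/(1-t))`. -/
theorem stmt_7 {K : Type*} [Field K] {E : Type*} [Fintype E] [DecidableEq E]
    {V : Type*} [AddCommGroup V] [Module K V] [FiniteDimensional K V]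
    (bdry : (E → K) →ₗ[K] V)
    (r : Finset E → ℕ)
    (hr : ∀ F : Finset E, r F = Module.finrank K (Submodule.span K
      ((fun σ => bdry (Pi.single σ 1)) '' (F : Set E))))
    (κ : ℕ) (hκ : r Finset.univ ≤ κ)
    (T Tx : ℝ → ℝ → ℝ)
    (hT : ∀ x y : ℝ, T x y =
      ∑ F : Finset E, (x - 1) ^ (κ - r F) * (y - 1) ^ (F.card - r F))
    (hTx : ∀ x y : ℝ, Tx x y =
      ∑ F : Finset E,
        (κ - r F : ℕ) * (x - 1) ^ (κ - r F - 1) * (y - 1) ^ (F.card - r F))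
    (t : ℝ) (ht : t ∈ Set.Ioo (0 : ℝ) 1) :
    0 < T (1 / t) (1 / (1 - t)) ∧
    ∑ F : Finset E,
        t ^ F.card * (1 - t) ^ (Fintype.card E - F.card) * ((κ - r F : ℕ) : ℝ) =
      (1 - t) / t * Tx (1 / t) (1 / (1 - t)) / T (1 / t) (1 / (1 - t)) := by
  classical
  obtain ⟨ht0, ht1⟩ := ht
  have h1t : (0:ℝ) < 1 - t := by linarith
  have htne : t ≠ 0 := ne_of_gt ht0
  have h1tne : (1 - t : ℝ) ≠ 0 := ne_of_gt h1t
  set n := Fintype.card E with hn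
  -- rank bounds
  have hrκ : ∀ F : Finset E, r F ≤ κ := by
    intro F
    refine le_trans ?_ hκ
    rw [hr F, hr Finset.univ]
    exact Submodule.finrank_mono (Submodule.span_mono
      (Set.image_mono (Finset.coe_subset.mpr (Finset.subset_univ F))))
  have hrm : ∀ F : Finset E, r F ≤ F.card := by
    intro F
    rw [hr F]
    rw [← Finset.coe_image]
    exact le_trans (finrank_span_finset_le_card _) Finset.card_image_le
  -- substitutions
  have hx : 1 / t - 1 = (1 - t) / t := by field_simp
  have hy : 1 / (1 - t) - 1 = t / (1 - t) := by field_simp; ring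
  set a : ℝ := (1 - t) / t with ha
  set b : ℝ := t / (1 - t) with hb
  have ha0 : 0 < a := div_pos h1t ht0
  have hb0 : 0 < b := div_pos ht0 h1t
  set c : ℝ := t ^ κ * (1 - t) ^ n / (1 - t) ^ κ with hc
  have hc0 : 0 < c := by positivity
  have key : ∀ F : Finset E,
      t ^ F.card * (1 - t) ^ (n - F.card) =
        c * (a ^ (κ - r F) * b ^ (F.card - r F)) := by
    intro F
    exact stmt7_key t ht0 ht1 (r F) F.card n κ (hrκ F) (hrm F)
      (Finset.card_le_univ F)
  -- binomial identity
  have hbin : ∑ F : Finset E, t ^ F.card * (1 - t) ^ (n - F.card) = 1 := by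
    have h := Finset.prod_add (fun _ : E => t) (fun _ : E => 1 - t)
      (Finset.univ : Finset E)
    simp only [Finset.prod_const, Finset.powerset_univ, Finset.card_univ_diff,
      add_sub_cancel, Finset.prod_const_one, one_pow] at h
    rw [← h]
  have hTval : T (1 / t) (1 / (1 - t)) =
      ∑ F : Finset E, a ^ (κ - r F) * b ^ (F.card - r F) := by
    rw [hT, hx, hy]
  have hcT : c * T (1 / t) (1 / (1 - t)) = 1 := by
    rw [hTval, Finset.mul_sum]
    rw [← hbin]
    exact Finset.sum_congr rfl fun F _ => (key F).symm
  have hTpos : 0 < T (1 / t) (1 / (1 - t)) := by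
    nlinarith [hc0, hcT]
  refine ⟨hTpos, ?_⟩
  -- Tx relation
  have hTxval : a * Tx (1 / t) (1 / (1 - t)) =
      ∑ F : Finset E, ((κ - r F : ℕ) : ℝ) * a ^ (κ - r F) * b ^ (F.card - r F) := by
    rw [hTx, hx, hy, Finset.mul_sum]
    refine Finset.sum_congr rfl fun F _ => ?_
    rcases Nat.eq_zero_or_pos (κ - r F) with h0 | hpos
    · simp [h0]
    · obtain ⟨j, hj⟩ : ∃ j, κ - r F = j + 1 := ⟨κ - r F - 1, by omega⟩
      rw [hj]
      simp only [Nat.add_sub_cancel, pow_succ]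
      push_cast
      ring
  have hLHS : ∑ F : Finset E,
      t ^ F.card * (1 - t) ^ (n - F.card) * ((κ - r F : ℕ) : ℝ) =
      c * (a * Tx (1 / t) (1 / (1 - t))) := by
    rw [hTxval, Finset.mul_sum]
    refine Finset.sum_congr rfl fun F _ => ?_
    rw [key F]
    ring
  rw [hLHS]
  have hTne : T (1 / t) (1 / (1 - t)) ≠ 0 := ne_of_gt hTpos
  rw [eq_div_iff hTne]
  linear_combination a * Tx (1 / t) (1 / (1 - t)) * hcT
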